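/- Let H be a real Hilbert space and Γ ⊆ H totally bounded and linearly independent. Suppose (g_n)_{n∈ℕ} is a sequence in Γ chosen by the geometric greedy algorithm, i.e. with Λ_n := {g_1,…,g_n}, for every n the element g_{n+1} ∈ Γ satisfies min_{μ∈Λ_n} ‖g_{n+1} − μ‖ = sup_{g∈Γ} min_{μ∈Λ_n} ‖g − μ‖ = h_{Λ_n,Γ}. Then h_{Λ_n,Γ} → 0 as n → ∞, and ‖f − I_{Λ_n}(f)‖ → 0 as n → ∞ for every f in the closed linear span H_Γ of Γ. -/

import Mathlib

open Filter
open scoped RealInnerProductSpace ENNReal Topology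

/-- Generalized interpolation operator: orthogonal projection onto the span of `Λ`. -/
noncomputable def interp {H : Type*} [NormedAddCommGroup H] [InnerProductSpace ℝ H]
    (Λ : Finset H) (f : H) : H :=
  haveI : FiniteDimensional ℝ (Submodule.span ℝ (Λ : Set H)) :=
    FiniteDimensional.span_of_finite ℝ Λ.finite_toSet
  (Submodule.orthogonalProjectionOnto (Submodule.span ℝ (Λ : Set H)) f : H)

/-- Generalized power function: distance from `g` to the span of `Λ`. -/
noncomputable def powerFn {H : Type*} [NormedAddCommGroup H] [InnerProductSpace ℝ H]
    (Λ : Finset H) (g : H) : ℝ := ‖g - interp Λ g‖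


/-- Fill distance of `Λ` in `Γ`: the supremum over `g ∈ Γ` of the distance from `g` to `Λ`. -/
noncomputable def fillDist {M : Type*} [PseudoEMetricSpace M] (Λ Γ : Set M) : ℝ≥0∞ :=
  ⨆ g ∈ Γ, EMetric.infEdist g Λ

section Aux

set_option linter.unusedSectionVars false
variable {H : Type*} [NormedAddCommGroup H] [InnerProductSpace ℝ H] [CompleteSpace H]

lemma interp_mem (Λ : Finset H) (f : H) : interp Λ f ∈ Submodule.span ℝ (Λ : Set H) := by
  haveI : FiniteDimensional ℝ (Submodule.span ℝ (Λ : Set H)) :=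
    FiniteDimensional.span_of_finite ℝ Λ.finite_toSet
  exact (Submodule.orthogonalProjectionOnto (Submodule.span ℝ (Λ : Set H)) f).2

lemma interp_norm_le (Λ : Finset H) (f v : H) (hv : v ∈ Submodule.span ℝ (Λ : Set H)) :
    ‖f - interp Λ f‖ ≤ ‖f - v‖ := by
  haveI : FiniteDimensional ℝ (Submodule.span ℝ (Λ : Set H)) :=
    FiniteDimensional.span_of_finite ℝ Λ.finite_toSet
  have h : interp Λ f = (Submodule.orthogonalProjectionOnto (Submodule.span ℝ (Λ : Set H)) f : H) := rfl
  rw [h, Submodule.coe_orthogonalProjectionOnto_apply, Submodule.starProjection_minimal]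
  exact ciInf_le ⟨0, by rintro x ⟨y, rfl⟩; exact norm_nonneg _⟩
    (⟨v, hv⟩ : Submodule.span ℝ (Λ : Set H))

lemma interp_add (Λ : Finset H) (f f' : H) :
    interp Λ (f + f') = interp Λ f + interp Λ f' := by
  haveI : FiniteDimensional ℝ (Submodule.span ℝ (Λ : Set H)) :=
    FiniteDimensional.span_of_finite ℝ Λ.finite_toSet
  show ((Submodule.orthogonalProjectionOnto (Submodule.span ℝ (Λ : Set H)) (f + f') : _) : H) = _
  rw [map_add]
  rfl

lemma interp_smul (Λ : Finset H) (c : ℝ) (f : H) :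
    interp Λ (c • f) = c • interp Λ f := by
  haveI : FiniteDimensional ℝ (Submodule.span ℝ (Λ : Set H)) :=
    FiniteDimensional.span_of_finite ℝ Λ.finite_toSet
  show ((Submodule.orthogonalProjectionOnto (Submodule.span ℝ (Λ : Set H)) (c • f) : _) : H) = _
  rw [map_smul]
  rfl

lemma interp_zero (Λ : Finset H) : interp Λ (0 : H) = 0 := by
  haveI : FiniteDimensional ℝ (Submodule.span ℝ (Λ : Set H)) :=
    FiniteDimensional.span_of_finite ℝ Λ.finite_toSet
  show ((Submodule.orthogonalProjectionOnto (Submodule.span ℝ (Λ : Set H)) (0 : H) : _) : H) = _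
  rw [map_zero]
  rfl

end Aux

/-- convergence of the geometric (`h`-)greedy algorithm on a totally bounded,
linearly independent set `Γ`. The sequence is `0`-indexed: `Λ n = {g_0, …, g_{n-1}}`, and the
selection rule states that `g_n` has maximal distance to `Λ n` among all elements of `Γ`
(so that this distance equals the fill distance `h_{Λ n, Γ}`). Then `h_{Λ n, Γ} → 0` and
`‖f - I_{Λ n}(f)‖ → 0` for every `f` in the closed linear span of `Γ`. -/
theorem stmt_16 {H : Type*} [NormedAddCommGroup H] [InnerProductSpace ℝ H] [CompleteSpace H]
    [DecidableEq H] (Γ : Set H) (hΓ : TotallyBounded Γ)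
    (hΓli : LinearIndependent (ι := Γ) ℝ Subtype.val)
    (g : ℕ → H) (hmem : ∀ n, g n ∈ Γ)
    (hgreedy : ∀ (n : ℕ), ∀ γ ∈ Γ,
      EMetric.infEdist γ (((Finset.range n).image g : Finset H) : Set H) ≤
        EMetric.infEdist (g n) (((Finset.range n).image g : Finset H) : Set H)) :
    Tendsto (fun n => fillDist (((Finset.range n).image g : Finset H) : Set H) Γ)
        atTop (𝓝 0) ∧
      ∀ f ∈ closure (Submodule.span ℝ Γ : Set H),
        Tendsto (fun n => ‖f - interp ((Finset.range n).image g) f‖) atTop (𝓝 0) := by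
  set Λ : ℕ → Finset H := fun n => (Finset.range n).image g with hΛdef
  set h : ℕ → ℝ≥0∞ := fun n => fillDist ((Λ n : Set H)) Γ with hhdef
  have hΛmono : ∀ {m n : ℕ}, m ≤ n → (Λ m : Set H) ⊆ (Λ n : Set H) := by
    intro m n hmn
    exact Finset.coe_subset.2 (Finset.image_subset_image (Finset.range_subset_range.2 hmn))
  have hgm : ∀ {m n : ℕ}, m < n → g m ∈ (Λ n : Set H) := fun {m n} hmn =>
    Finset.mem_coe.2 (Finset.mem_image_of_mem g (Finset.mem_range.2 hmn))
  have hEq : ∀ n, h n = EMetric.infEdist (g n) (Λ n : Set H) := by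
    intro n
    refine le_antisymm (iSup₂_le fun γ hγ => hgreedy n γ hγ) ?_
    exact le_iSup₂ (f := fun γ _ => EMetric.infEdist γ (Λ n : Set H)) (g n) (hmem n)
  have hanti : Antitone h := fun m n hmn =>
    iSup₂_mono fun γ _ => EMetric.infEdist_anti (hΛmono hmn)
  have htend : Tendsto h atTop (𝓝 (⨅ n, h n)) := tendsto_atTop_iInf hanti
  have hinf : (⨅ n, h n) = 0 := by
    by_contra hne
    have hpos : 0 < ⨅ n, h n := pos_iff_ne_zero.2 hne
    set ε : ℝ≥0∞ := min (⨅ n, h n) 1 with hεdef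
    have hεpos : 0 < ε := lt_min hpos zero_lt_one
    have hsep : ∀ {m n : ℕ}, m < n → ε ≤ edist (g n) (g m) := by
      intro m n hmn
      calc ε ≤ ⨅ k, h k := min_le_left _ _
        _ ≤ h n := iInf_le _ n
        _ = EMetric.infEdist (g n) (Λ n : Set H) := hEq n
        _ ≤ edist (g n) (g m) := EMetric.infEdist_le_edist_of_mem (hgm hmn)
    obtain ⟨t, htf, hcov⟩ := EMetric.totallyBounded_iff.1 hΓ (ε / 2)
      (ENNReal.half_pos hεpos.ne')
    have hc : ∀ n : ℕ, ∃ y ∈ t, g n ∈ Metric.eball y (ε / 2) := fun n => by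
      simpa using hcov (hmem n)
    choose c hct hcball using hc
    haveI : Finite t := htf
    obtain ⟨m, n, hmn, hcmn⟩ :=
      Finite.exists_ne_map_eq_of_infinite (fun n : ℕ => (⟨c n, hct n⟩ : t))
    have hcmn' : c m = c n := by simpa using hcmn
    have hkey : ∀ {m n : ℕ}, m < n → c m = c n → False := by
      intro m n hmn hcmn
      have h1 : edist (g n) (c n) < ε / 2 := hcball n
      have h2 : edist (c n) (g m) < ε / 2 := by
        rw [edist_comm, ← hcmn]; exact hcball m
      have : edist (g n) (g m) < ε := by
        calc edist (g n) (g m) ≤ edist (g n) (c n) + edist (c n) (g m) := edist_triangle _ _ _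
          _ < ε / 2 + ε / 2 := ENNReal.add_lt_add h1 h2
          _ = ε := ENNReal.add_halves ε
      exact absurd (hsep hmn) (not_le.2 this)
    rcases hmn.lt_or_gt with h' | h'
    · exact hkey h' hcmn'
    · exact hkey h' hcmn'.symm
  rw [hinf] at htend
  refine ⟨htend, ?_⟩
  -- part 2
  have key : ∀ γ ∈ Γ, Tendsto (fun n => ‖γ - interp (Λ n) γ‖) atTop (𝓝 0) := by
    intro γ hγ
    have hle : ∀ n, ENNReal.ofReal ‖γ - interp (Λ n) γ‖ ≤ h n := by
      intro n
      refine le_trans ?_ (le_iSup₂ (f := fun x _ => EMetric.infEdist x (Λ n : Set H)) γ hγ)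
      refine EMetric.le_infEdist.2 ?_
      intro μ hμ
      rw [edist_dist, dist_eq_norm]
      exact ENNReal.ofReal_le_ofReal (interp_norm_le _ _ _ (Submodule.subset_span hμ))
    have hten : Tendsto (fun n => ENNReal.ofReal ‖γ - interp (Λ n) γ‖) atTop (𝓝 0) :=
      tendsto_of_tendsto_of_tendsto_of_le_of_le tendsto_const_nhds htend
        (fun n => zero_le) hle
    have heq : (fun n => ‖γ - interp (Λ n) γ‖) =
        fun n => (ENNReal.ofReal ‖γ - interp (Λ n) γ‖).toReal := by
      funext n; rw [ENNReal.toReal_ofReal (norm_nonneg _)]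
    rw [heq]
    exact (ENNReal.tendsto_toReal (a := 0) (by simp)).comp hten
  have keyspan : ∀ s ∈ Submodule.span ℝ Γ,
      Tendsto (fun n => ‖s - interp (Λ n) s‖) atTop (𝓝 0) := by
    intro s hs
    induction hs using Submodule.span_induction with
    | mem x hx => exact key x hx
    | zero => simpa [interp_zero] using tendsto_const_nhds (α := ℝ) (f := atTop (α := ℕ))
    | add x y hx hy ihx ihy =>
      have hle : ∀ n, ‖(x + y) - interp (Λ n) (x + y)‖ ≤
          ‖x - interp (Λ n) x‖ + ‖y - interp (Λ n) y‖ := by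
        intro n
        rw [interp_add]
        calc ‖(x + y) - (interp (Λ n) x + interp (Λ n) y)‖
            = ‖(x - interp (Λ n) x) + (y - interp (Λ n) y)‖ := by congr 1; abel
          _ ≤ _ := norm_add_le _ _
      have := ihx.add ihy
      rw [add_zero] at this
      exact squeeze_zero (fun n => norm_nonneg _) hle this
    | smul c x hx ihx =>
      have heq : ∀ n, ‖c • x - interp (Λ n) (c • x)‖ = |c| * ‖x - interp (Λ n) x‖ := by
        intro n
        rw [interp_smul, ← smul_sub, norm_smul, Real.norm_eq_abs]
      simp only [heq]
      simpa using ihx.const_mul |c|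
  intro f hf
  rw [Metric.tendsto_atTop]
  intro ε hε
  obtain ⟨s, hs, hsf⟩ := Metric.mem_closure_iff.1 hf (ε / 2) (by positivity)
  have hts := keyspan s hs
  rw [Metric.tendsto_atTop] at hts
  obtain ⟨N, hN⟩ := hts (ε / 2) (by positivity)
  refine ⟨N, fun n hn => ?_⟩
  have h1 : ‖f - interp (Λ n) f‖ ≤ ‖f - interp (Λ n) s‖ :=
    interp_norm_le _ _ _ (interp_mem (Λ n) s)
  have h2 : ‖f - interp (Λ n) s‖ ≤ ‖f - s‖ + ‖s - interp (Λ n) s‖ := by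
    calc ‖f - interp (Λ n) s‖ = ‖(f - s) + (s - interp (Λ n) s)‖ := by congr 1; abel
      _ ≤ _ := norm_add_le _ _
  have h3 : ‖f - s‖ < ε / 2 := by rw [← dist_eq_norm]; exact hsf
  have h4 : ‖s - interp (Λ n) s‖ < ε / 2 := by
    have := hN n hn
    rwa [Real.dist_eq, sub_zero, abs_of_nonneg (norm_nonneg _)] at this
  rw [Real.dist_eq, sub_zero, abs_of_nonneg (norm_nonneg _)]
  calc ‖f - interp (Λ n) f‖ ≤ ‖f - s‖ + ‖s - interp (Λ n) s‖ := h1.trans h2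
    _ < ε / 2 + ε / 2 := add_lt_add h3 h4
    _ = ε := add_halves ε
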